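/- Let (a_k) be a sequence of real numbers converging to a* such that (a_{k+1} - a*)/(a_k - a*) = σ + λ_k for all k, where |σ| < 1, σ ≠ 1, a_k ≠ a* for all k, and λ_k → 0. Define the Aitken transform b_k = a_k - (a_k - a_{k+1})²/(a_k - 2a_{k+1} + a_{k+2}) (whenever the denominator is nonzero). Then (b_k - a*)/(a_k - a*) → 0, i.e., the transformed sequence converges to a* faster than (a_k). -/
import Mathlib


theorem stmt_6 (a : ℕ → ℝ) (astar σ : ℝ) (lam : ℕ → ℝ)
    (ha : Filter.Tendsto a Filter.atTop (nhds astar))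
    (hσ : |σ| < 1) (hσ1 : σ ≠ 1)
    (hne : ∀ k, a k ≠ astar)
    (hratio : ∀ k, (a (k + 1) - astar) / (a k - astar) = σ + lam k)
    (hlam : Filter.Tendsto lam Filter.atTop (nhds 0))
    (b : ℕ → ℝ)
    (hb : ∀ k, a k - 2 * a (k + 1) + a (k + 2) ≠ 0 →
      b k = a k - (a k - a (k + 1)) ^ 2 / (a k - 2 * a (k + 1) + a (k + 2))) :
    Filter.Tendsto (fun k => (b k - astar) / (a k - astar)) Filter.atTop (nhds 0) := by
  set r : ℕ → ℝ := fun k => σ + lam k with hrdef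
  have h2 : Filter.Tendsto (fun k => lam (k + 1)) Filter.atTop (nhds 0) :=
    hlam.comp (Filter.tendsto_add_atTop_nat 1)
  have hrt : Filter.Tendsto r Filter.atTop (nhds σ) := by
    have : Filter.Tendsto (fun k => σ + lam k) Filter.atTop (nhds (σ + 0)) :=
      tendsto_const_nhds.add hlam
    simpa using this
  have hst : Filter.Tendsto (fun k => r (k + 1)) Filter.atTop (nhds σ) := by
    have : Filter.Tendsto (fun k => σ + lam (k + 1)) Filter.atTop (nhds (σ + 0)) :=
      tendsto_const_nhds.add h2
    simpa using this
  have hdne : (1 - σ) ^ 2 ≠ 0 := pow_ne_zero _ (sub_ne_zero.mpr (Ne.symm hσ1))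
  have hd : Filter.Tendsto (fun k => 1 - 2 * r k + r k * r (k + 1)) Filter.atTop
      (nhds ((1 - σ) ^ 2)) := by
    have h : Filter.Tendsto (fun k => 1 - 2 * r k + r k * r (k + 1)) Filter.atTop
        (nhds (1 - 2 * σ + σ * σ)) :=
      ((tendsto_const_nhds (x := (1:ℝ))).sub (hrt.const_mul 2)).add (hrt.mul hst)
    have heq : (1 - σ) ^ 2 = 1 - 2 * σ + σ * σ := by ring
    rw [heq]
    exact h
  have hf : Filter.Tendsto (fun k => 1 - (1 - r k) ^ 2 / (1 - 2 * r k + r k * r (k + 1)))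
      Filter.atTop (nhds 0) := by
    have hnum : Filter.Tendsto (fun k => (1 - r k) ^ 2) Filter.atTop (nhds ((1 - σ) ^ 2)) :=
      (tendsto_const_nhds.sub hrt).pow 2
    have : Filter.Tendsto (fun k => 1 - (1 - r k) ^ 2 / (1 - 2 * r k + r k * r (k + 1)))
        Filter.atTop (nhds (1 - (1 - σ) ^ 2 / (1 - σ) ^ 2)) :=
      (tendsto_const_nhds (x := (1:ℝ))).sub (hnum.div hd hdne)
    simpa [div_self hdne] using this
  have hev : ∀ᶠ k in Filter.atTop,
      (b k - astar) / (a k - astar) = 1 - (1 - r k) ^ 2 / (1 - 2 * r k + r k * r (k + 1)) := by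
    filter_upwards [hd.eventually_ne hdne] with k hk
    have he : a k - astar ≠ 0 := sub_ne_zero.mpr (hne k)
    have he1 : a (k + 1) - astar ≠ 0 := sub_ne_zero.mpr (hne (k + 1))
    have h1 : a (k + 1) - astar = r k * (a k - astar) :=
      (div_eq_iff he).mp (hratio k)
    have h1' : a (k + 2) - astar = r (k + 1) * (a (k + 1) - astar) :=
      (div_eq_iff he1).mp (hratio (k + 1))
    have hden : a k - 2 * a (k + 1) + a (k + 2)
        = (a k - astar) * (1 - 2 * r k + r k * r (k + 1)) := by
      linear_combination h1' + (r (k + 1) - 2) * h1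
    have hnum : a k - a (k + 1) = (a k - astar) * (1 - r k) := by
      linear_combination -h1
    have hdk : a k - 2 * a (k + 1) + a (k + 2) ≠ 0 := by
      rw [hden]; exact mul_ne_zero he hk
    rw [hb k hdk, hden, hnum]
    field_simp
    ring
  exact Filter.Tendsto.congr' (hev.mono fun k h => h.symm) hf
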